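/- For each fixed t ≥ 0, standard Brownian motion is almost surely not differentiable at t: P(ω : s ↦ B(s,ω) is differentiable at t) = 0. -/

import Mathlib

open MeasureTheory ProbabilityTheory Filter Set
open scoped NNReal ENNReal

noncomputable section

structure IsStdBM {Ω : Type*} [MeasurableSpace Ω] (P : Measure Ω) (B : ℝ → Ω → ℝ) : Prop where
  meas : ∀ t, Measurable (B t)
  start : ∀ ω, B 0 ω = 0
  cont : ∀ ω, Continuous fun t => B t ω
  indep : ∀ (n : ℕ) (t : Fin (n + 1) → ℝ), (∀ i, 0 ≤ t i) → Monotone t →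
      iIndepFun
        (fun i : Fin n => fun ω => B (t i.succ) ω - B (t i.castSucc) ω) P
  gauss : ∀ s t : ℝ, 0 ≤ s → s ≤ t →
      P.map (fun ω => B t ω - B s ω) = gaussianReal 0 (t - s).toNNReal

open Real in
lemma gauss_abs_le_bound (v : ℝ≥0) (hv : v ≠ 0) (a : ℝ) :
    gaussianReal 0 v {x : ℝ | |x| ≤ a} ≤ ENNReal.ofReal ((Real.sqrt (2 * π * v))⁻¹ * (2 * a)) := by
  have hset : {x : ℝ | |x| ≤ a} = Set.Icc (-a) a := by ext x; simp [abs_le]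
  rw [gaussianReal_apply 0 hv, hset]
  calc ∫⁻ x in Set.Icc (-a) a, gaussianPDF 0 v x
      ≤ ∫⁻ _ in Set.Icc (-a) a, ENNReal.ofReal ((Real.sqrt (2 * π * v))⁻¹) := by
        refine lintegral_mono fun x => ?_
        rw [gaussianPDF]
        refine ENNReal.ofReal_le_ofReal ?_
        rw [gaussianPDFReal]
        calc (√(2 * π * v))⁻¹ * rexp (- (x - 0)^2 / (2 * v))
            ≤ (√(2 * π * v))⁻¹ * 1 := by
              have : rexp (- (x - 0)^2 / (2 * v)) ≤ 1 :=
                Real.exp_le_one_iff.mpr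
                  (div_nonpos_of_nonpos_of_nonneg (neg_nonpos.mpr (sq_nonneg _)) (by positivity))
              have h0 : (0:ℝ) ≤ (√(2 * π * v))⁻¹ := by positivity
              nlinarith [Real.exp_pos (- (x - 0)^2 / (2 * v))]
          _ = (√(2 * π * v))⁻¹ := mul_one _
    _ = ENNReal.ofReal ((Real.sqrt (2 * π * v))⁻¹) * volume (Set.Icc (-a) a) := by
        rw [setLIntegral_const]
    _ ≤ ENNReal.ofReal ((Real.sqrt (2 * π * v))⁻¹ * (2 * a)) := by
        rw [Real.volume_Icc, show a - -a = 2 * a by ring,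
          ← ENNReal.ofReal_mul (by positivity)]

open Real in
/-- For each fixed `t ≥ 0`, standard Brownian motion is almost surely not
differentiable at `t`. -/
theorem not_differentiable_at_fixed_time
    {Ω : Type*} [MeasurableSpace Ω] (P : Measure Ω) [IsProbabilityMeasure P]
    (B : ℝ → Ω → ℝ) (hB : IsStdBM P B) (t : ℝ) (ht : 0 ≤ t) :
    P {ω | DifferentiableAt ℝ (fun s => B s ω) t} = 0 := by
  -- the sequence of increments
  set h : ℕ → ℝ := fun n => 1 / ((n : ℝ) + 1) with hh
  have hpos : ∀ n, 0 < h n := fun n => by positivity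
  set A : ℕ → ℕ → Set Ω :=
    fun C N => ⋂ n ∈ Set.Ici N, {ω | |B (t + h n) ω - B t ω| ≤ (C : ℝ) * h n} with hA
  -- inclusion in the union of the events A C N
  have hsub : {ω | DifferentiableAt ℝ (fun s => B s ω) t} ⊆ ⋃ C, ⋃ N, A C N := by
    intro ω hd
    simp only [Set.mem_setOf_eq] at hd
    set f : ℝ → ℝ := fun s => B s ω with hf
    set L : ℝ := deriv f t with hL
    have hder : HasDerivAt f L t := hd.hasDerivAt
    have hslope : Tendsto (slope f t) (nhdsWithin t {t}ᶜ) (nhds L) :=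
      hasDerivAt_iff_tendsto_slope.mp hder
    -- the sequence t + h n tends to t within {t}ᶜ
    have hu0 : Tendsto (fun n : ℕ => t + h n) atTop (nhds t) := by
      have := tendsto_one_div_add_atTop_nhds_zero_nat (𝕜 := ℝ)
      simpa [hh, one_div] using (tendsto_const_nhds (x := t)).add this
    have hu : Tendsto (fun n : ℕ => t + h n) atTop (nhdsWithin t {t}ᶜ) := by
      refine tendsto_nhdsWithin_of_tendsto_nhds_of_eventually_within _ hu0 ?_
      refine Filter.Eventually.of_forall fun n => ?_
      simp only [Set.mem_compl_iff, Set.mem_singleton_iff]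
      have := hpos n; intro hcontra; nlinarith [hcontra]
    have hcomp : Tendsto (fun n => slope f t (t + h n)) atTop (nhds L) := hslope.comp hu
    have habs : Tendsto (fun n => |slope f t (t + h n)|) atTop (nhds |L|) := hcomp.abs
    have hev : ∀ᶠ n in atTop, |slope f t (t + h n)| < |L| + 1 :=
      habs.eventually_lt_const (by linarith [abs_nonneg L])
    obtain ⟨N, hN⟩ := eventually_atTop.mp hev
    refine Set.mem_iUnion.mpr ⟨⌈|L| + 1⌉₊, Set.mem_iUnion.mpr ⟨N, ?_⟩⟩
    refine Set.mem_iInter₂.mpr fun n hn => ?_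
    simp only [Set.mem_setOf_eq]
    have hslope_eq : f (t + h n) - f t = slope f t (t + h n) * h n := by
      rw [slope_def_field, add_sub_cancel_left, div_mul_cancel₀ _ (hpos n).ne']
    have h1 : |f (t + h n) - f t| ≤ (|L| + 1) * h n := by
      rw [hslope_eq, abs_mul, abs_of_pos (hpos n)]
      exact mul_le_mul_of_nonneg_right (le_of_lt (hN n hn)) (le_of_lt (hpos n))
    calc |B (t + h n) ω - B t ω| = |f (t + h n) - f t| := rfl
      _ ≤ (|L| + 1) * h n := h1
      _ ≤ (⌈|L| + 1⌉₊ : ℝ) * h n :=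
          mul_le_mul_of_nonneg_right (Nat.le_ceil _) (le_of_lt (hpos n))
  -- each A C N is null
  have hnull : ∀ C N, P (A C N) = 0 := by
    intro C N
    -- single-event bound
    have hbound : ∀ n : ℕ, N ≤ n → P (A C N) ≤ ENNReal.ofReal (2 * C * Real.sqrt (h n)) := by
      intro n hn
      have hmono : A C N ⊆ {ω | |B (t + h n) ω - B t ω| ≤ (C : ℝ) * h n} := fun ω hω => by
        exact Set.mem_iInter₂.mp hω n hn
      have hXmeas : Measurable (fun ω => B (t + h n) ω - B t ω) :=
        (hB.meas _).sub (hB.meas t)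
      have hsetm : MeasurableSet {x : ℝ | |x| ≤ (C : ℝ) * h n} := by
        have : {x : ℝ | |x| ≤ (C : ℝ) * h n} = Set.Icc (-((C : ℝ) * h n)) ((C : ℝ) * h n) := by
          ext x; simp [abs_le]
        rw [this]; exact measurableSet_Icc
      have hmap := hB.gauss t (t + h n) ht (le_add_of_nonneg_right (le_of_lt (hpos n)))
      have hts : t + h n - t = h n := by ring
      rw [hts] at hmap
      have hv : (h n).toNNReal ≠ 0 := by
        simp only [ne_eq, Real.toNNReal_eq_zero, not_le]
        exact hpos n
      have hPeq : P {ω | |B (t + h n) ω - B t ω| ≤ (C : ℝ) * h n}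
          = gaussianReal 0 (h n).toNNReal {x : ℝ | |x| ≤ (C : ℝ) * h n} := by
        rw [← hmap, Measure.map_apply hXmeas hsetm]
        rfl
      have hgb := gauss_abs_le_bound (h n).toNNReal hv ((C : ℝ) * h n)
      have hcoe : ((h n).toNNReal : ℝ) = h n := Real.coe_toNNReal _ (le_of_lt (hpos n))
      rw [hcoe] at hgb
      -- real estimate
      have hreal : (Real.sqrt (2 * π * h n))⁻¹ * (2 * ((C : ℝ) * h n))
          ≤ 2 * C * Real.sqrt (h n) := by
        have hs1 : Real.sqrt (h n) ≤ Real.sqrt (2 * π * h n) := by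
          apply Real.sqrt_le_sqrt
          nlinarith [Real.pi_gt_three, hpos n]
        have hsp : 0 < Real.sqrt (h n) := Real.sqrt_pos.mpr (hpos n)
        have hs2 : (Real.sqrt (2 * π * h n))⁻¹ ≤ (Real.sqrt (h n))⁻¹ :=
          inv_anti₀ hsp hs1
        calc (Real.sqrt (2 * π * h n))⁻¹ * (2 * ((C : ℝ) * h n))
            ≤ (Real.sqrt (h n))⁻¹ * (2 * ((C : ℝ) * h n)) := by
              apply mul_le_mul_of_nonneg_right hs2
              positivity
          _ = 2 * C * (h n / Real.sqrt (h n)) := by ring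
          _ = 2 * C * Real.sqrt (h n) := by rw [Real.div_sqrt]
      calc P (A C N) ≤ P {ω | |B (t + h n) ω - B t ω| ≤ (C : ℝ) * h n} := measure_mono hmono
        _ = gaussianReal 0 (h n).toNNReal {x : ℝ | |x| ≤ (C : ℝ) * h n} := hPeq
        _ ≤ ENNReal.ofReal ((Real.sqrt (2 * π * h n))⁻¹ * (2 * ((C : ℝ) * h n))) := hgb
        _ ≤ ENNReal.ofReal (2 * C * Real.sqrt (h n)) := ENNReal.ofReal_le_ofReal hreal
    -- the bound tends to zero
    have htend : Tendsto (fun n : ℕ => ENNReal.ofReal (2 * C * Real.sqrt (h n))) atTop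
        (nhds 0) := by
      have h0 : Tendsto h atTop (nhds 0) := tendsto_one_div_add_atTop_nhds_zero_nat
      have h1 : Tendsto (fun n => Real.sqrt (h n)) atTop (nhds 0) := by
        have := (Real.continuous_sqrt.tendsto 0).comp h0
        simpa [Function.comp_def] using this
      have h2 : Tendsto (fun n => 2 * (C : ℝ) * Real.sqrt (h n)) atTop (nhds 0) := by
        simpa using h1.const_mul (2 * (C : ℝ))
      have := (ENNReal.continuous_ofReal.tendsto 0).comp h2
      simpa [Function.comp_def] using this
    have : P (A C N) ≤ 0 :=
      ge_of_tendsto htend (eventually_atTop.mpr ⟨N, fun n hn => hbound n hn⟩)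
    exact le_antisymm this zero_le
  refine measure_mono_null hsub ?_
  exact measure_iUnion_null fun C => measure_iUnion_null fun N => hnull C N
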